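/- Let G be an abelian group, g ∈ G of order d+2 for some d ∈ ℕ, and let u₁ be any atom of a reduced atomic monoid H₁. In the product monoid H₁ × B({g,−g}), the set of lengths of the element u₁·(gᵈ⁺²)·((−g)ᵈ⁺²) equals {3, 3+d}. -/

import Mathlib

/-- Set of lengths of factorizations of `a` into irreducible elements (atoms). -/
def LengthsOf {M : Type*} [CommMonoid M] (a : M) : Set ℕ :=
  {n | ∃ s : Multiset M, Multiset.card s = n ∧ (∀ x ∈ s, Irreducible x) ∧ s.prod = a}

/-- The set of distances (delta set) of a monoid. -/
def DeltaSet (M : Type*) [CommMonoid M] : Set ℕ :=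
  {d | 0 < d ∧ ∃ (a : M) (k : ℕ), k ∈ LengthsOf a ∧ k + d ∈ LengthsOf a ∧
      ∀ ℓ ∈ LengthsOf a, ¬(k < ℓ ∧ ℓ < k + d)}

/-- A monoid is atomic if every nonunit is a finite product of irreducible elements. -/
def IsAtomicMonoid (M : Type*) [CommMonoid M] : Prop :=
  ∀ a : M, ¬ IsUnit a → ∃ s : Multiset M, (∀ x ∈ s, Irreducible x) ∧ s.prod = a

universe u

/-- A monoid is Krull if it admits a divisor homomorphism into a free abelian monoid. -/
def IsKrullMonoid (M : Type u) [CommMonoid M] : Prop :=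
  ∃ (P : Type u) (φ : M →* Multiplicative (P →₀ ℕ)), ∀ a b : M, a ∣ b ↔ φ a ∣ φ b

/-- The monoid of zero-sum sequences over `G₀ ⊆ G`, as a submonoid of the
free abelian monoid (written multiplicatively) of multisets over `G`. -/
def ZeroSumMonoid {G : Type*} [AddCommGroup G] (G₀ : Set G) :
    Submonoid (Multiplicative (Multiset G)) where
  carrier := {S | (∀ x ∈ Multiplicative.toAdd S, x ∈ G₀) ∧ (Multiplicative.toAdd S).sum = 0}
  one_mem' := by simp
  mul_mem' := by
    intro a b ha hb
    refine ⟨?_, ?_⟩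
    · intro x hx
      rw [toAdd_mul, Multiset.mem_add] at hx
      exact hx.elim (ha.1 x) (hb.1 x)
    · rw [toAdd_mul, Multiset.sum_add, ha.2, hb.2, add_zero]


open Multiset

section AuxGeneral

lemma aux_mult_multiset_unit_eq_one {G : Type*} {x : Multiplicative (Multiset G)}
    (h : IsUnit x) : x = 1 := by
  obtain ⟨u, rfl⟩ := h
  have h2 : Multiplicative.toAdd (u : Multiplicative (Multiset G))
      + Multiplicative.toAdd (↑u⁻¹ : Multiplicative (Multiset G)) = 0 := by
    rw [← toAdd_mul, u.mul_inv, toAdd_one]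
  have h3 := congrArg Multiset.card h2
  rw [Multiset.card_add, Multiset.card_zero] at h3
  have h4 : Multiset.card (Multiplicative.toAdd (u : Multiplicative (Multiset G))) = 0 := by omega
  have h5 : Multiplicative.toAdd (u : Multiplicative (Multiset G)) = 0 :=
    Multiset.card_eq_zero.mp h4
  have := Multiplicative.toAdd.injective (a₁ := (u : Multiplicative (Multiset G))) (a₂ := 1)
  exact this (by rw [h5, toAdd_one])

lemma aux_prod_isUnit_iff {M N : Type*} [CommMonoid M] [CommMonoid N] (p : M × N) :
    IsUnit p ↔ IsUnit p.1 ∧ IsUnit p.2 := by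
  constructor
  · intro h
    exact ⟨h.map (MonoidHom.fst M N), h.map (MonoidHom.snd M N)⟩
  · rintro ⟨h1, h2⟩
    obtain ⟨a, ha⟩ := isUnit_iff_exists_inv.mp h1
    obtain ⟨c, hc⟩ := isUnit_iff_exists_inv.mp h2
    exact isUnit_iff_exists_inv.mpr ⟨(a, c), Prod.ext ha hc⟩

lemma aux_prod_irreducible_iff {M N : Type*} [CommMonoid M] [CommMonoid N]
    (hM : ∀ u : M, IsUnit u → u = 1) (hN : ∀ u : N, IsUnit u → u = 1) (p : M × N) :
    Irreducible p ↔ (Irreducible p.1 ∧ p.2 = 1) ∨ (p.1 = 1 ∧ Irreducible p.2) := by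
  constructor
  · intro h
    have hsplit : p = (p.1, 1) * (1, p.2) := by ext <;> simp
    rcases h.isUnit_or_isUnit hsplit with h1 | h2
    · have h2u : IsUnit p.1 := ((aux_prod_isUnit_iff _).mp h1).1
      have hp1 : p.1 = 1 := hM _ h2u
      refine Or.inr ⟨hp1, ?_⟩
      constructor
      · intro hu
        exact h.not_isUnit ((aux_prod_isUnit_iff p).mpr ⟨hp1 ▸ isUnit_one, hu⟩)
      · intro a b hab
        have : p = (1, a) * (1, b) := by
          ext
          · simp [hp1]
          · simpa using hab
        rcases h.isUnit_or_isUnit this with h'|h'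
        · exact Or.inl ((aux_prod_isUnit_iff _).mp h').2
        · exact Or.inr ((aux_prod_isUnit_iff _).mp h').2
    · have h2u : IsUnit p.2 := ((aux_prod_isUnit_iff _).mp h2).2
      have hp2 : p.2 = 1 := hN _ h2u
      refine Or.inl ⟨?_, hp2⟩
      constructor
      · intro hu
        exact h.not_isUnit ((aux_prod_isUnit_iff p).mpr ⟨hu, hp2 ▸ isUnit_one⟩)
      · intro a b hab
        have : p = (a, 1) * (b, 1) := by
          ext
          · simpa using hab
          · simp [hp2]
        rcases h.isUnit_or_isUnit this with h'|h'
        · exact Or.inl ((aux_prod_isUnit_iff _).mp h').1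
        · exact Or.inr ((aux_prod_isUnit_iff _).mp h').1
  · rintro (⟨h1, h2⟩ | ⟨h1, h2⟩)
    · constructor
      · intro hu
        exact h1.not_isUnit ((aux_prod_isUnit_iff p).mp hu).1
      · intro a b hab
        have hfst : p.1 = a.1 * b.1 := by rw [hab]; rfl
        rcases h1.isUnit_or_isUnit hfst with h'|h'
        · left
          refine (aux_prod_isUnit_iff a).mpr ⟨h', ?_⟩
          have : a.2 * b.2 = 1 := by rw [← h2, hab]; rfl
          exact IsUnit.of_mul_eq_one _ this
        · right
          refine (aux_prod_isUnit_iff b).mpr ⟨h', ?_⟩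
          have : b.2 * a.2 = 1 := by rw [← h2, hab, mul_comm]; rfl
          exact IsUnit.of_mul_eq_one _ this
    · constructor
      · intro hu
        exact h2.not_isUnit ((aux_prod_isUnit_iff p).mp hu).2
      · intro a b hab
        have hsnd : p.2 = a.2 * b.2 := by rw [hab]; rfl
        rcases h2.isUnit_or_isUnit hsnd with h'|h'
        · left
          refine (aux_prod_isUnit_iff a).mpr ⟨?_, h'⟩
          have : a.1 * b.1 = 1 := by rw [← h1, hab]; rfl
          exact IsUnit.of_mul_eq_one _ this
        · right
          refine (aux_prod_isUnit_iff b).mpr ⟨?_, h'⟩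
          have : b.1 * a.1 = 1 := by rw [← h1, hab, mul_comm]; rfl
          exact IsUnit.of_mul_eq_one _ this

lemma aux_card_eq_one_of_prod_irreducible {N : Type*} [CommMonoid N] (s : Multiset N)
    (h : ∀ x ∈ s, Irreducible x) (hp : Irreducible s.prod) : Multiset.card s = 1 := by
  induction s using Multiset.induction with
  | empty =>
    rw [Multiset.prod_zero] at hp
    exact absurd isUnit_one hp.not_isUnit
  | cons a t ih =>
    classical
    rw [Multiset.prod_cons] at hp
    rcases hp.isUnit_or_isUnit rfl with h1 | h2
    · exact absurd h1 (h a (Multiset.mem_cons_self a t)).not_isUnit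
    · have ht : t = 0 := by
        by_contra hne
        obtain ⟨c, hc⟩ := Multiset.exists_mem_of_ne_zero hne
        have hct : c ::ₘ t.erase c = t := Multiset.cons_erase hc
        rw [← hct, Multiset.prod_cons] at h2
        exact (h c (Multiset.mem_cons_of_mem hc)).not_isUnit (isUnit_of_mul_isUnit_left h2)
      subst ht
      simp

lemma aux_decomp2 {α : Type*} [DecidableEq α] {x y : α} (hxy : x ≠ y) (S : Multiset α)
    (h : ∀ a ∈ S, a = x ∨ a = y) :
    S = replicate (S.count x) x + replicate (S.count y) y := by
  induction S using Multiset.induction with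
  | empty => simp
  | cons a s ih =>
    have hs : ∀ b ∈ s, b = x ∨ b = y := fun b hb => h b (Multiset.mem_cons_of_mem hb)
    rcases h a (Multiset.mem_cons_self a s) with rfl | rfl <;>
      simp [Multiset.count_cons, hxy, hxy.symm, Multiset.replicate_succ,
        Multiset.cons_add, Multiset.add_cons, ← ih hs]

lemma aux_decomp3 {α : Type*} [DecidableEq α] {x y z : α} (hxy : x ≠ y) (hxz : x ≠ z)
    (hyz : y ≠ z) (S : Multiset α) (h : ∀ a ∈ S, a = x ∨ a = y ∨ a = z) :
    S = replicate (S.count x) x + replicate (S.count y) y + replicate (S.count z) z := by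
  induction S using Multiset.induction with
  | empty => simp
  | cons a s ih =>
    have hs : ∀ b ∈ s, b = x ∨ b = y ∨ b = z := fun b hb => h b (Multiset.mem_cons_of_mem hb)
    rcases h a (Multiset.mem_cons_self a s) with rfl | rfl | rfl <;>
      simp [Multiset.count_cons, hxy, hxy.symm, hxz, hxz.symm, hyz, hyz.symm,
        Multiset.replicate_succ, Multiset.cons_add, Multiset.add_cons, ← ih hs]

lemma aux_toAdd_prod {G : Type*} [AddCommMonoid G] (t : Multiset (Multiplicative G)) :
    Multiplicative.toAdd t.prod = (t.map Multiplicative.toAdd).sum := by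
  induction t using Multiset.induction with
  | empty => simp
  | cons a s ih => simp [ih]

end AuxGeneral

section ZS

variable {G : Type*} [AddCommGroup G]

/-- The element of the free abelian monoid with `m` copies of `g` and `n` copies of `-g`. -/
def eltZS (g : G) (m n : ℕ) : Multiplicative (Multiset G) :=
  Multiplicative.ofAdd (replicate m g + replicate n (-g))

lemma eltZS_mul (g : G) (m n m' n' : ℕ) :
    eltZS g m n * eltZS g m' n' = eltZS g (m + m') (n + n') := by
  unfold eltZS
  rw [← ofAdd_add]
  congr 1
  rw [Multiset.replicate_add, Multiset.replicate_add]
  abel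

lemma eltZS_zero (g : G) : eltZS g 0 0 = 1 := by
  unfold eltZS
  simp

lemma eltZS_pow (g : G) (m n k : ℕ) : (eltZS g m n) ^ k = eltZS g (k * m) (k * n) := by
  induction k with
  | zero => simpa using (eltZS_zero g).symm
  | succ k ih =>
    rw [pow_succ, ih, eltZS_mul]
    ring_nf

lemma toAdd_eltZS (g : G) (m n : ℕ) :
    Multiplicative.toAdd (eltZS g m n) = replicate m g + replicate n (-g) := rfl

lemma count_toAdd_eltZS [DecidableEq G] (g : G) (hne : g ≠ -g) (m n : ℕ) :
    (Multiplicative.toAdd (eltZS g m n)).count g = m ∧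
    (Multiplicative.toAdd (eltZS g m n)).count (-g) = n := by
  rw [toAdd_eltZS]
  constructor
  · rw [Multiset.count_add, Multiset.count_replicate, Multiset.count_replicate, if_pos rfl,
      if_neg (fun h => hne h.symm), add_zero]
  · rw [Multiset.count_add, Multiset.count_replicate, Multiset.count_replicate, if_neg hne,
      if_pos rfl, zero_add]

lemma eltZS_inj [DecidableEq G] (g : G) (hne : g ≠ -g) {m n m' n' : ℕ}
    (h : eltZS g m n = eltZS g m' n') : m = m' ∧ n = n' := by
  constructor
  · have := congrArg (fun x => (Multiplicative.toAdd x).count g) h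
    simpa [(count_toAdd_eltZS g hne m n).1, (count_toAdd_eltZS g hne m' n').1] using this
  · have := congrArg (fun x => (Multiplicative.toAdd x).count (-g)) h
    simpa [(count_toAdd_eltZS g hne m n).2, (count_toAdd_eltZS g hne m' n').2] using this

variable (g : G) (d : ℕ)

lemma sum_rep_rep (m n : ℕ) :
    (replicate m g + replicate n (-g)).sum = ((m : ℤ) - n) • g := by
  rw [Multiset.sum_add, Multiset.sum_replicate, Multiset.sum_replicate, sub_smul,
    natCast_zsmul, natCast_zsmul, smul_neg, sub_eq_add_neg]

lemma ne_neg_self (hd : 0 < d) (hg : addOrderOf g = d + 2) : g ≠ -g := by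
  intro h
  have h2 : (2 : ℕ) • g = 0 := by
    rw [two_nsmul]
    nth_rewrite 2 [h]
    rw [add_neg_cancel]
  have := Nat.le_of_dvd (by norm_num) (addOrderOf_dvd_of_nsmul_eq_zero h2)
  omega

lemma eltZS_mem (hg : addOrderOf g = d + 2) (m n : ℕ) (h : ((d : ℤ) + 2) ∣ (m : ℤ) - n) :
    eltZS g m n ∈ ZeroSumMonoid ({g, -g} : Set G) := by
  constructor
  · intro x hx
    rw [toAdd_eltZS, Multiset.mem_add] at hx
    rcases hx with hx | hx
    · left
      exact Multiset.eq_of_mem_replicate hx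
    · right
      exact Multiset.eq_of_mem_replicate hx
  · rw [toAdd_eltZS, sum_rep_rep]
    refine addOrderOf_dvd_iff_zsmul_eq_zero.mp ?_
    rw [hg]
    exact_mod_cast h

lemma rep_of_mem (hd : 0 < d) (hg : addOrderOf g = d + 2)
    {x : Multiplicative (Multiset G)} (hx : x ∈ ZeroSumMonoid ({g, -g} : Set G)) :
    ∃ m n : ℕ, ((d : ℤ) + 2) ∣ (m : ℤ) - n ∧ x = eltZS g m n := by
  classical
  have hne := ne_neg_self g d hd hg
  obtain ⟨hmem, hsum⟩ := hx
  set S := Multiplicative.toAdd x with hS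
  have hdec : S = replicate (S.count g) g + replicate (S.count (-g)) (-g) := by
    refine aux_decomp2 hne S ?_
    intro a ha
    have h2 := hmem a ha
    simp only [Set.mem_insert_iff, Set.mem_singleton_iff] at h2
    exact h2
  refine ⟨S.count g, S.count (-g), ?_, ?_⟩
  · rw [hdec, sum_rep_rep] at hsum
    have := addOrderOf_dvd_iff_zsmul_eq_zero.mpr hsum
    rw [hg] at this
    exact_mod_cast this
  · refine Multiplicative.toAdd.injective ?_
    rw [toAdd_eltZS]
    exact hdec

lemma unit_ZS_iff (x : ↥(ZeroSumMonoid ({g, -g} : Set G))) : IsUnit x ↔ x = 1 := by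
  constructor
  · intro h
    have h2 : IsUnit (x : Multiplicative (Multiset G)) :=
      h.map (ZeroSumMonoid ({g, -g} : Set G)).subtype
    exact Subtype.ext (aux_mult_multiset_unit_eq_one h2)
  · rintro rfl
    exact isUnit_one

end ZS


lemma aux_mul_eq {e x c : ℕ} (he : 0 < e) (h : x * e + c = e) :
    (x = 0 ∧ c = e) ∨ (x = 1 ∧ c = 0) := by
  have hx : x ≤ 1 := Nat.le_of_mul_le_mul_right (by rw [one_mul]; exact Nat.le.intro h) he
  interval_cases x
  · left; omega
  · right; omega

lemma aux_dvd_le_cases {e m : ℕ} (hdvd : e ∣ m) (hle : m ≤ e) : m = 0 ∨ m = e := by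
  rcases Nat.eq_zero_or_pos m with rfl | hm
  · exact Or.inl rfl
  · exact Or.inr (le_antisymm hle (Nat.le_of_dvd hm hdvd))

section ZS2

variable {G : Type*} [AddCommGroup G] (g : G) (d : ℕ)

lemma eltZS_ne_one [DecidableEq G] (hne : g ≠ -g) {m n : ℕ} (h : m ≠ 0 ∨ n ≠ 0) :
    eltZS g m n ≠ 1 := by
  intro he
  have h2 := eltZS_inj g hne (he.trans (eltZS_zero g).symm)
  omega

lemma not_unit_ZS (x : ↥(ZeroSumMonoid ({g, -g} : Set G)))
    (h : (x : Multiplicative (Multiset G)) ≠ 1) : ¬ IsUnit x := by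
  intro hx
  rw [(unit_ZS_iff g x).mp hx] at h
  exact h rfl

lemma coe_eq_one_ZS {x : ↥(ZeroSumMonoid ({g, -g} : Set G))}
    (h : (x : Multiplicative (Multiset G)) = 1) : x = 1 := Subtype.ext h

lemma irred_classify (hd : 0 < d) (hg : addOrderOf g = d + 2)
    (u : ↥(ZeroSumMonoid ({g, -g} : Set G))) (hu : Irreducible u) :
    (u : Multiplicative (Multiset G)) = eltZS g (d + 2) 0 ∨
    (u : Multiplicative (Multiset G)) = eltZS g 0 (d + 2) ∨
    (u : Multiplicative (Multiset G)) = eltZS g 1 1 := by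
  classical
  have hne := ne_neg_self g d hd hg
  obtain ⟨m, n, hdvd, hrep⟩ := rep_of_mem g d hd hg u.2
  have hmn0 : ¬ (m = 0 ∧ n = 0) := by
    rintro ⟨rfl, rfl⟩
    exact hu.not_isUnit ((unit_ZS_iff g u).mpr (coe_eq_one_ZS g (hrep.trans (eltZS_zero g))))
  rcases Nat.eq_zero_or_pos m with hm | hm
  · -- m = 0, so (d+2) ∣ n
    subst hm
    have hn : n ≠ 0 := by omega
    have hdn : (d + 2) ∣ n := by
      have h3 : ((d : ℤ) + 2) ∣ (n : ℤ) := dvd_neg.mp (by simpa using hdvd)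
      exact_mod_cast h3
    have hge : d + 2 ≤ n := Nat.le_of_dvd (by omega) hdn
    by_cases heq : n = d + 2
    · subst heq
      exact Or.inr (Or.inl hrep)
    · exfalso
      have hlt : d + 2 < n := by omega
      have hdn2 : (d + 2) ∣ (n - (d + 2)) := Nat.dvd_sub hdn dvd_rfl
      have hdvd2 : ((d : ℤ) + 2) ∣ ((0 : ℕ) : ℤ) - ((n - (d + 2) : ℕ) : ℤ) := by
        rw [Nat.cast_zero, zero_sub]
        exact dvd_neg.mpr (by exact_mod_cast Int.natCast_dvd_natCast.mpr hdn2)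
      set y : ↥(ZeroSumMonoid ({g, -g} : Set G)) :=
        ⟨eltZS g 0 (d + 2), eltZS_mem g d hg 0 (d + 2) ⟨-1, by push_cast; ring⟩⟩
      set z : ↥(ZeroSumMonoid ({g, -g} : Set G)) :=
        ⟨eltZS g 0 (n - (d + 2)), eltZS_mem g d hg 0 (n - (d + 2)) hdvd2⟩
      have huyz : u = y * z := by
        refine Subtype.ext ?_
        show (u : Multiplicative (Multiset G)) = eltZS g 0 (d + 2) * eltZS g 0 (n - (d + 2))
        rw [eltZS_mul, hrep]
        congr 1
        omega
      rcases hu.isUnit_or_isUnit huyz with h | h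
      · exact not_unit_ZS g y (eltZS_ne_one g hne (m := 0) (n := d + 2) (Or.inr (by omega))) h
      · exact not_unit_ZS g z (eltZS_ne_one g hne (m := 0) (n := n - (d + 2)) (Or.inr (by omega))) h
  rcases Nat.eq_zero_or_pos n with hn | hn
  · -- n = 0, so (d+2) ∣ m
    subst hn
    have hdm : (d + 2) ∣ m := by
      have h3 : ((d : ℤ) + 2) ∣ (m : ℤ) := by simpa using hdvd
      exact_mod_cast h3
    have hge : d + 2 ≤ m := Nat.le_of_dvd (by omega) hdm
    by_cases heq : m = d + 2
    · subst heq
      exact Or.inl hrep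
    · exfalso
      have hlt : d + 2 < m := by omega
      have hdm2 : (d + 2) ∣ (m - (d + 2)) := Nat.dvd_sub hdm dvd_rfl
      have hdvd2 : ((d : ℤ) + 2) ∣ ((m - (d + 2) : ℕ) : ℤ) - ((0 : ℕ) : ℤ) := by
        rw [Nat.cast_zero, sub_zero]
        exact_mod_cast Int.natCast_dvd_natCast.mpr hdm2
      set y : ↥(ZeroSumMonoid ({g, -g} : Set G)) :=
        ⟨eltZS g (d + 2) 0, eltZS_mem g d hg (d + 2) 0 ⟨1, by push_cast; ring⟩⟩
      set z : ↥(ZeroSumMonoid ({g, -g} : Set G)) :=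
        ⟨eltZS g (m - (d + 2)) 0, eltZS_mem g d hg (m - (d + 2)) 0 hdvd2⟩
      have huyz : u = y * z := by
        refine Subtype.ext ?_
        show (u : Multiplicative (Multiset G)) = eltZS g (d + 2) 0 * eltZS g (m - (d + 2)) 0
        rw [eltZS_mul, hrep]
        congr 1
        omega
      rcases hu.isUnit_or_isUnit huyz with h | h
      · exact not_unit_ZS g y (eltZS_ne_one g hne (m := d + 2) (n := 0) (Or.inl (by omega))) h
      · exact not_unit_ZS g z (eltZS_ne_one g hne (m := m - (d + 2)) (n := 0) (Or.inl (by omega))) h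
  · -- m, n ≥ 1
    by_cases heq : m = 1 ∧ n = 1
    · exact Or.inr (Or.inr (by rw [hrep, heq.1, heq.2]))
    · exfalso
      have hdvd2 : ((d : ℤ) + 2) ∣ ((m - 1 : ℕ) : ℤ) - ((n - 1 : ℕ) : ℤ) := by
        have h2 : ((m - 1 : ℕ) : ℤ) - ((n - 1 : ℕ) : ℤ) = (m : ℤ) - n := by omega
        rw [h2]
        exact hdvd
      set y : ↥(ZeroSumMonoid ({g, -g} : Set G)) :=
        ⟨eltZS g 1 1, eltZS_mem g d hg 1 1 (by simp)⟩
      set z : ↥(ZeroSumMonoid ({g, -g} : Set G)) :=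
        ⟨eltZS g (m - 1) (n - 1), eltZS_mem g d hg (m - 1) (n - 1) hdvd2⟩
      have huyz : u = y * z := by
        refine Subtype.ext ?_
        show (u : Multiplicative (Multiset G)) = eltZS g 1 1 * eltZS g (m - 1) (n - 1)
        rw [eltZS_mul, hrep]
        congr 1 <;> omega
      rcases hu.isUnit_or_isUnit huyz with h | h
      · exact not_unit_ZS g y (eltZS_ne_one g hne (m := 1) (n := 1) (Or.inl one_ne_zero)) h
      · refine not_unit_ZS g z
          (eltZS_ne_one g hne (m := m - 1) (n := n - 1) ?_) h
        omega

lemma irred_atoms (hd : 0 < d) (hg : addOrderOf g = d + 2)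
    (u : ↥(ZeroSumMonoid ({g, -g} : Set G)))
    (hcoe : (u : Multiplicative (Multiset G)) = eltZS g (d + 2) 0 ∨
      (u : Multiplicative (Multiset G)) = eltZS g 0 (d + 2) ∨
      (u : Multiplicative (Multiset G)) = eltZS g 1 1) :
    Irreducible u := by
  classical
  have hne := ne_neg_self g d hd hg
  constructor
  · refine not_unit_ZS g u ?_
    rcases hcoe with h | h | h <;> rw [h]
    · exact eltZS_ne_one g hne (Or.inl (by omega))
    · exact eltZS_ne_one g hne (Or.inr (by omega))
    · exact eltZS_ne_one g hne (Or.inl (by omega))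
  · intro a b hab
    obtain ⟨m₁, n₁, hdvd₁, hrep₁⟩ := rep_of_mem g d hd hg a.2
    obtain ⟨m₂, n₂, hdvd₂, hrep₂⟩ := rep_of_mem g d hd hg b.2
    have hcab : (u : Multiplicative (Multiset G)) = eltZS g (m₁ + m₂) (n₁ + n₂) := by
      rw [hab]
      push_cast [hrep₁, hrep₂]
      rw [eltZS_mul]
    rcases hcoe with h | h | h
    · -- u = vA : m₁+m₂ = d+2, n₁+n₂ = 0
      obtain ⟨hM, hN⟩ := eltZS_inj g hne (hcab.symm.trans h)
      have hn₁ : n₁ = 0 := by omega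
      have hn₂ : n₂ = 0 := by omega
      have hdm₁ : (d + 2) ∣ m₁ := by
        subst hn₁
        have h3 : ((d : ℤ) + 2) ∣ (m₁ : ℤ) := by simpa using hdvd₁
        exact_mod_cast h3
      rcases aux_dvd_le_cases hdm₁ (by omega) with h0 | h0
      · left
        refine (unit_ZS_iff g a).mpr (coe_eq_one_ZS g ?_)
        rw [hrep₁, h0, hn₁, eltZS_zero]
      · right
        refine (unit_ZS_iff g b).mpr (coe_eq_one_ZS g ?_)
        have hm₂ : m₂ = 0 := by omega
        rw [hrep₂, hm₂, hn₂, eltZS_zero]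
    · -- u = vB
      obtain ⟨hM, hN⟩ := eltZS_inj g hne (hcab.symm.trans h)
      have hm₁ : m₁ = 0 := by omega
      have hm₂ : m₂ = 0 := by omega
      have hdn₁ : (d + 2) ∣ n₁ := by
        subst hm₁
        have h3 : ((d : ℤ) + 2) ∣ (n₁ : ℤ) := dvd_neg.mp (by simpa using hdvd₁)
        exact_mod_cast h3
      rcases aux_dvd_le_cases hdn₁ (by omega) with h0 | h0
      · left
        refine (unit_ZS_iff g a).mpr (coe_eq_one_ZS g ?_)
        rw [hrep₁, h0, hm₁, eltZS_zero]
      · right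
        refine (unit_ZS_iff g b).mpr (coe_eq_one_ZS g ?_)
        have hn₂ : n₂ = 0 := by omega
        rw [hrep₂, hm₂, hn₂, eltZS_zero]
    · -- u = vC : m₁+m₂ = 1, n₁+n₂ = 1
      obtain ⟨hM, hN⟩ := eltZS_inj g hne (hcab.symm.trans h)
      have hmn₁ : m₁ = n₁ := by
        by_contra hne'
        have h1 : (0 : ℤ) < |(m₁ : ℤ) - n₁| := abs_pos.mpr (by omega)
        have h2 := Int.le_of_dvd h1 ((dvd_abs _ _).mpr hdvd₁)
        have h3 : |(m₁ : ℤ) - n₁| ≤ 1 := abs_le.mpr (by omega)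
        linarith
      rcases Nat.eq_zero_or_pos m₁ with h0 | h0
      · left
        refine (unit_ZS_iff g a).mpr (coe_eq_one_ZS g ?_)
        rw [hrep₁, h0, ← hmn₁, h0, eltZS_zero]
      · right
        refine (unit_ZS_iff g b).mpr (coe_eq_one_ZS g ?_)
        have hm₂ : m₂ = 0 := by omega
        have hn₂ : n₂ = 0 := by omega
        rw [hrep₂, hm₂, hn₂, eltZS_zero]

end ZS2


section ZS3

variable {G : Type*} [AddCommGroup G] (g : G) (d : ℕ)

lemma factorization_card (hd : 0 < d) (hg : addOrderOf g = d + 2)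
    (s : Multiset ↥(ZeroSumMonoid ({g, -g} : Set G)))
    (hirr : ∀ x ∈ s, Irreducible x)
    (hprod : ((s.prod : ↥(ZeroSumMonoid ({g, -g} : Set G))) : Multiplicative (Multiset G)) =
      eltZS g (d + 2) (d + 2)) :
    Multiset.card s = 2 ∨ Multiset.card s = d + 2 := by
  classical
  have hne := ne_neg_self g d hd hg
  let vA : ↥(ZeroSumMonoid ({g, -g} : Set G)) :=
    ⟨eltZS g (d + 2) 0, eltZS_mem g d hg (d + 2) 0 ⟨1, by push_cast; ring⟩⟩
  let vB : ↥(ZeroSumMonoid ({g, -g} : Set G)) :=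
    ⟨eltZS g 0 (d + 2), eltZS_mem g d hg 0 (d + 2) ⟨-1, by push_cast; ring⟩⟩
  let vC : ↥(ZeroSumMonoid ({g, -g} : Set G)) :=
    ⟨eltZS g 1 1, eltZS_mem g d hg 1 1 (by simp)⟩
  have hAB : vA ≠ vB := by
    intro h
    have h2 : eltZS g (d + 2) 0 = eltZS g 0 (d + 2) := Subtype.ext_iff.mp h
    have := eltZS_inj g hne h2
    omega
  have hAC : vA ≠ vC := by
    intro h
    have h2 : eltZS g (d + 2) 0 = eltZS g 1 1 := Subtype.ext_iff.mp h
    have := eltZS_inj g hne h2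
    omega
  have hBC : vB ≠ vC := by
    intro h
    have h2 : eltZS g 0 (d + 2) = eltZS g 1 1 := Subtype.ext_iff.mp h
    have := eltZS_inj g hne h2
    omega
  have hcls : ∀ x ∈ s, x = vA ∨ x = vB ∨ x = vC := by
    intro x hx
    rcases irred_classify g d hd hg x (hirr x hx) with h | h | h
    · exact Or.inl (Subtype.ext h)
    · exact Or.inr (Or.inl (Subtype.ext h))
    · exact Or.inr (Or.inr (Subtype.ext h))
  set a := s.count vA with ha
  set bb := s.count vB with hbb
  set c := s.count vC with hc
  have hdec : s = replicate a vA + replicate bb vB + replicate c vC :=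
    aux_decomp3 hAB hAC hBC s hcls
  have h1 := map_multiset_prod (ZeroSumMonoid ({g, -g} : Set G)).subtype s
  rw [Submonoid.coe_subtype, hprod] at h1
  rw [hdec, Multiset.map_add, Multiset.map_add, Multiset.map_replicate, Multiset.map_replicate,
    Multiset.map_replicate, Multiset.prod_add, Multiset.prod_add, Multiset.prod_replicate,
    Multiset.prod_replicate, Multiset.prod_replicate] at h1
  have hvA : (vA : Multiplicative (Multiset G)) = eltZS g (d + 2) 0 := rfl
  have hvB : (vB : Multiplicative (Multiset G)) = eltZS g 0 (d + 2) := rfl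
  have hvC : (vC : Multiplicative (Multiset G)) = eltZS g 1 1 := rfl
  rw [hvA, hvB, hvC, eltZS_pow, eltZS_pow, eltZS_pow, eltZS_mul, eltZS_mul] at h1
  obtain ⟨hA, hB⟩ := eltZS_inj g hne h1
  simp only [mul_zero, mul_one, add_zero, zero_add] at hA hB
  have hcard : Multiset.card s = a + bb + c := by
    rw [hdec]
    simp [Multiset.card_add, Multiset.card_replicate]
  rcases aux_mul_eq (show 0 < d + 2 by omega) hA.symm with ⟨ha0, hc0⟩ | ⟨ha1, hc1⟩
  · -- a = 0, c = d + 2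
    have hB2 : bb * (d + 2) + (d + 2) = d + 2 := by omega
    rcases aux_mul_eq (show 0 < d + 2 by omega) hB2 with ⟨hb0, _⟩ | ⟨_, habs⟩
    · right; omega
    · omega
  · -- a = 1, c = 0
    have hB2 : bb * (d + 2) + 0 = d + 2 := by omega
    rcases aux_mul_eq (show 0 < d + 2 by omega) hB2 with ⟨_, habs⟩ | ⟨hb1, _⟩
    · omega
    · left; omega

end ZS3

/-- In `H₁ × B({g,-g})` with `g` of order `d+2`, the set of lengths of
`u₁ · g^{d+2} · (-g)^{d+2}` (for `u₁` an atom of the reduced atomic monoid `H₁`)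
is `{3, 3+d}`. -/
theorem lengths_of_special_element {G : Type*} [AddCommGroup G] (g : G) (d : ℕ) (hd : 0 < d)
    (hg : addOrderOf g = d + 2)
    {M : Type*} [CancelCommMonoid M] (hred : ∀ u : M, IsUnit u → u = 1)
    (hatomic : IsAtomicMonoid M) (u₁ : M) (hu : Irreducible u₁)
    (b : ↥(ZeroSumMonoid ({g, -g} : Set G)))
    (hb : (b : Multiplicative (Multiset G)) =
      Multiplicative.ofAdd (Multiset.replicate (d + 2) g + Multiset.replicate (d + 2) (-g))) :
    LengthsOf ((u₁, b) : M × ↥(ZeroSumMonoid ({g, -g} : Set G))) = {3, 3 + d} := by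
  classical
  have hne := ne_neg_self g d hd hg
  have hNunits : ∀ u : ↥(ZeroSumMonoid ({g, -g} : Set G)), IsUnit u → u = 1 :=
    fun u hu' => (unit_ZS_iff g u).mp hu'
  have hbelt : (b : Multiplicative (Multiset G)) = eltZS g (d + 2) (d + 2) := hb
  let vA : ↥(ZeroSumMonoid ({g, -g} : Set G)) :=
    ⟨eltZS g (d + 2) 0, eltZS_mem g d hg (d + 2) 0 ⟨1, by push_cast; ring⟩⟩
  let vB : ↥(ZeroSumMonoid ({g, -g} : Set G)) :=
    ⟨eltZS g 0 (d + 2), eltZS_mem g d hg 0 (d + 2) ⟨-1, by push_cast; ring⟩⟩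
  let vC : ↥(ZeroSumMonoid ({g, -g} : Set G)) :=
    ⟨eltZS g 1 1, eltZS_mem g d hg 1 1 (by simp)⟩
  have hvAi : Irreducible vA := irred_atoms g d hd hg vA (Or.inl rfl)
  have hvBi : Irreducible vB := irred_atoms g d hd hg vB (Or.inr (Or.inl rfl))
  have hvCi : Irreducible vC := irred_atoms g d hd hg vC (Or.inr (Or.inr rfl))
  ext n
  simp only [Set.mem_insert_iff, Set.mem_singleton_iff]
  constructor
  · rintro ⟨s, hcard, hirr, hprod⟩
    have hclass : ∀ p : M × ↥(ZeroSumMonoid ({g, -g} : Set G)), p ∈ s →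
        (Irreducible p.1 ∧ p.2 = 1) ∨ (p.1 = 1 ∧ Irreducible p.2) :=
      fun p hp => (aux_prod_irreducible_iff hred hNunits p).mp (hirr p hp)
    set P : M × ↥(ZeroSumMonoid ({g, -g} : Set G)) → Prop := fun p => p.2 = 1 with hP
    have hsplit := Multiset.filter_add_not P s
    have hclassA : ∀ p ∈ s.filter P, Irreducible p.1 ∧ p.2 = 1 := by
      intro p hp
      obtain ⟨hps, hp2⟩ := Multiset.mem_filter.mp hp
      rcases hclass p hps with h | h
      · exact h
      · exact absurd (hp2 ▸ isUnit_one) h.2.not_isUnit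
    have hclassB : ∀ p ∈ s.filter (fun p => ¬ P p), p.1 = 1 ∧ Irreducible p.2 := by
      intro p hp
      obtain ⟨hps, hp2⟩ := Multiset.mem_filter.mp hp
      rcases hclass p hps with h | h
      · exact absurd h.2 hp2
      · exact h
    -- first components
    have hfst : (s.map Prod.fst).prod = u₁ := by
      have h := map_multiset_prod (MonoidHom.fst M (↥(ZeroSumMonoid ({g, -g} : Set G)))) s
      rw [hprod] at h
      simpa using h.symm
    have hfst2 : ((s.filter P).map Prod.fst).prod *
        ((s.filter (fun p => ¬ P p)).map Prod.fst).prod = u₁ := by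
      rw [← Multiset.prod_add, ← Multiset.map_add, hsplit]
      exact hfst
    have hfstB : ((s.filter (fun p => ¬ P p)).map Prod.fst).prod = 1 := by
      refine Multiset.prod_eq_one ?_
      intro x hx
      obtain ⟨p, hp, rfl⟩ := Multiset.mem_map.mp hx
      exact (hclassB p hp).1
    rw [hfstB, mul_one] at hfst2
    have hcardA : Multiset.card (s.filter P) = 1 := by
      have h2 : Multiset.card ((s.filter P).map Prod.fst) = 1 := by
        refine aux_card_eq_one_of_prod_irreducible _ ?_ (hfst2 ▸ hu)
        intro x hx
        obtain ⟨p, hp, rfl⟩ := Multiset.mem_map.mp hx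
        exact (hclassA p hp).1
      simpa [Multiset.card_map] using h2
    -- second components
    have hsnd : (s.map Prod.snd).prod = b := by
      have h := map_multiset_prod (MonoidHom.snd M (↥(ZeroSumMonoid ({g, -g} : Set G)))) s
      rw [hprod] at h
      simpa using h.symm
    have hsnd2 : ((s.filter P).map Prod.snd).prod *
        ((s.filter (fun p => ¬ P p)).map Prod.snd).prod = b := by
      rw [← Multiset.prod_add, ← Multiset.map_add, hsplit]
      exact hsnd
    have hsndA : ((s.filter P).map Prod.snd).prod = 1 := by
      refine Multiset.prod_eq_one ?_
      intro x hx
      obtain ⟨p, hp, rfl⟩ := Multiset.mem_map.mp hx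
      exact (hclassA p hp).2
    rw [hsndA, one_mul] at hsnd2
    have hcardB : Multiset.card (s.filter (fun p => ¬ P p)) = 2 ∨
        Multiset.card (s.filter (fun p => ¬ P p)) = d + 2 := by
      have h2 := factorization_card g d hd hg ((s.filter (fun p => ¬ P p)).map Prod.snd)
        (by
          intro x hx
          obtain ⟨p, hp, rfl⟩ := Multiset.mem_map.mp hx
          exact (hclassB p hp).2)
        (by rw [hsnd2]; exact hbelt)
      simpa [Multiset.card_map] using h2
    have hcards : Multiset.card (s.filter P) +
        Multiset.card (s.filter (fun p => ¬ P p)) = n := by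
      rw [← Multiset.card_add, hsplit, hcard]
    omega
  · -- backward direction
    have hone : ((1 : M), (1 : ↥(ZeroSumMonoid ({g, -g} : Set G)))) =
        (1 : M × ↥(ZeroSumMonoid ({g, -g} : Set G))) := rfl
    rintro (rfl | rfl)
    · refine ⟨(u₁, (1 : ↥(ZeroSumMonoid ({g, -g} : Set G)))) ::ₘ
        ((1 : M), vA) ::ₘ {((1 : M), vB)}, by simp, ?_, ?_⟩
      · intro x hx
        simp only [Multiset.mem_cons, Multiset.mem_singleton] at hx
        rcases hx with rfl | rfl | rfl
        · exact (aux_prod_irreducible_iff hred hNunits _).mpr (Or.inl ⟨hu, rfl⟩)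
        · exact (aux_prod_irreducible_iff hred hNunits _).mpr (Or.inr ⟨rfl, hvAi⟩)
        · exact (aux_prod_irreducible_iff hred hNunits _).mpr (Or.inr ⟨rfl, hvBi⟩)
      · rw [Multiset.prod_cons, Multiset.prod_cons, Multiset.prod_singleton]
        refine Prod.ext (by simp) ?_
        show (1 : ↥(ZeroSumMonoid ({g, -g} : Set G))) * (vA * vB) = b
        rw [one_mul]
        refine Subtype.ext ?_
        rw [Submonoid.coe_mul]
        show eltZS g (d + 2) 0 * eltZS g 0 (d + 2) = (b : Multiplicative (Multiset G))
        rw [eltZS_mul, hbelt, add_zero, zero_add]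
    · refine ⟨(u₁, (1 : ↥(ZeroSumMonoid ({g, -g} : Set G)))) ::ₘ
        replicate (d + 2) ((1 : M), vC), by simp [Multiset.card_replicate]; omega, ?_, ?_⟩
      · intro x hx
        rcases Multiset.mem_cons.mp hx with rfl | hx2
        · exact (aux_prod_irreducible_iff hred hNunits _).mpr (Or.inl ⟨hu, rfl⟩)
        · rw [Multiset.eq_of_mem_replicate hx2]
          exact (aux_prod_irreducible_iff hred hNunits _).mpr (Or.inr ⟨rfl, hvCi⟩)
      · rw [Multiset.prod_cons, Multiset.prod_replicate]
        refine Prod.ext ?_ ?_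
        · show u₁ * (((1 : M), vC) ^ (d + 2)).1 = u₁
          rw [Prod.pow_fst, one_pow, mul_one]
        · show (1 : ↥(ZeroSumMonoid ({g, -g} : Set G))) * (((1 : M), vC) ^ (d + 2)).2 = b
          rw [Prod.pow_snd, one_mul]
          refine Subtype.ext ?_
          rw [SubmonoidClass.coe_pow]
          show eltZS g 1 1 ^ (d + 2) = (b : Multiplicative (Multiset G))
          rw [eltZS_pow, hbelt, mul_one]
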